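/- Coercivity of the threshold functional: let G be a standard Gaussian, N independent of G with a symmetric distribution satisfying E[N²] < ∞, σ > 0 and ε > 0. If P(σN ≥ 2ε) > 0, then E[((|G + tσN| − tε)₊)²] ≥ t²ε² · P(σN ≥ 2ε, G > 0) for all t ≥ 0, and E[((|G + tσN| − tε)₊)²] → ∞ as t → ±∞; in particular the infimum inf_{t∈ℝ} E[((|G + tσN| − tε)₊)²] is attained at some finite t_⋆. -/

import Mathlib

open MeasureTheory ProbabilityTheory Filter Topology

lemma gauss_sq_integrable : Integrable (fun x : ℝ => x ^ 2) (gaussianReal 0 1) := by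
  rw [gaussianReal_of_var_ne_zero 0 one_ne_zero,
    integrable_withDensity_iff (measurable_gaussianPDF 0 1)
      (Filter.Eventually.of_forall fun x => ENNReal.ofReal_lt_top)]
  have h : Integrable (fun x : ℝ => x ^ (2:ℝ) * Real.exp (-(1/2) * x ^ 2)) volume :=
    integrable_rpow_mul_exp_neg_mul_sq (by norm_num) (by norm_num)
  have h2 : Integrable (fun x : ℝ => (Real.sqrt (2 * Real.pi))⁻¹ *
      (x ^ (2:ℝ) * Real.exp (-(1/2) * x ^ 2))) volume := h.const_mul _
  refine h2.congr (Filter.Eventually.of_forall fun x => ?_)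
  beta_reduce
  rw [show gaussianPDF 0 1 x = ENNReal.ofReal (gaussianPDFReal 0 1 x) from rfl,
    ENNReal.toReal_ofReal (gaussianPDFReal_nonneg _ _ _),
    show gaussianPDFReal 0 1 x
      = (Real.sqrt (2 * Real.pi * ((1:NNReal):ℝ)))⁻¹ * Real.exp (-(x - 0)^2 / (2 * ((1:NNReal):ℝ)))
      from rfl,
    show (2:ℝ) = ((2:ℕ):ℝ) by norm_num, Real.rpow_natCast x 2]
  push_cast
  rw [mul_one, sub_zero]
  ring_nf

lemma threshold_bound_aux (σ ε : ℝ) (hσ : 0 < σ) (hε : 0 < ε) (t x y : ℝ) :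
    (max (|x + t * σ * y| - t * ε) 0) ^ 2
      ≤ 3 * x ^ 2 + 3 * t ^ 2 * σ ^ 2 * y ^ 2 + 3 * t ^ 2 * ε ^ 2 := by
  have hM0 : (0:ℝ) ≤ max (|x + t * σ * y| - t * ε) 0 := le_max_right _ _
  have h1 : |x + t * σ * y| ≤ |x| + |t| * σ * |y| := by
    calc |x + t * σ * y| ≤ |x| + |t * σ * y| := abs_add_le _ _
      _ = |x| + |t| * σ * |y| := by rw [abs_mul, abs_mul, abs_of_pos hσ]
  have h2 : max (|x + t * σ * y| - t * ε) 0 ≤ |x| + |t| * σ * |y| + |t| * ε := by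
    apply max_le
    · have ht : -(t * ε) ≤ |t| * ε := by
        nlinarith [neg_le_abs t, hε.le, abs_nonneg t]
      linarith
    · have := abs_nonneg x
      have := mul_nonneg (mul_nonneg (abs_nonneg t) hσ.le) (abs_nonneg y)
      have := mul_nonneg (abs_nonneg t) hε.le
      linarith
  have e1 : (|t| * σ * |y|) ^ 2 = t ^ 2 * σ ^ 2 * y ^ 2 := by
    rw [mul_pow, mul_pow, sq_abs, sq_abs]
  have e2 : (|t| * ε) ^ 2 = t ^ 2 * ε ^ 2 := by rw [mul_pow, sq_abs]
  calc (max (|x + t * σ * y| - t * ε) 0) ^ 2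
      ≤ (|x| + |t| * σ * |y| + |t| * ε) ^ 2 := pow_le_pow_left₀ hM0 h2 2
    _ ≤ 3 * x ^ 2 + 3 * t ^ 2 * σ ^ 2 * y ^ 2 + 3 * t ^ 2 * ε ^ 2 := by
        nlinarith [sq_nonneg (|x| - |t| * σ * |y|), sq_nonneg (|x| - |t| * ε),
          sq_nonneg (|t| * σ * |y| - |t| * ε), sq_abs x, e1, e2]

/-- **Coercivity of the threshold functional.** Let `G ∼ N(0,1)` be independent of a symmetric
`N` with `E[N²] < ∞`, `σ > 0`, `ε > 0`. If `P(σN ≥ 2ε) > 0`, then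
`E[((|G + tσN| - tε)₊)²] ≥ t²ε² P(σN ≥ 2ε, G > 0)` for all `t ≥ 0`, the expectation tends to
`∞` as `t → ±∞`, and the infimum over `t ∈ ℝ` is attained at some finite `t⋆`. -/
theorem hsvr_threshold_coercive
    (ν : Measure ℝ) [IsProbabilityMeasure ν]
    (hνsymm : ν.map (fun x => -x) = ν)
    (hνmom : Integrable (fun x => x ^ 2) ν)
    (σ ε : ℝ) (hσ : 0 < σ) (hε : 0 < ε)
    (hpos : 0 < ν {x : ℝ | 2 * ε ≤ σ * x}) :
    (∀ t : ℝ, 0 ≤ t →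
      t ^ 2 * ε ^ 2 *
          (((gaussianReal 0 1).prod ν) {z : ℝ × ℝ | 2 * ε ≤ σ * z.2 ∧ 0 < z.1}).toReal ≤
        ∫ z : ℝ × ℝ,
          (max (|z.1 + t * σ * z.2| - t * ε) 0) ^ 2 ∂((gaussianReal 0 1).prod ν)) ∧
    Tendsto (fun t : ℝ => ∫ z : ℝ × ℝ,
        (max (|z.1 + t * σ * z.2| - t * ε) 0) ^ 2 ∂((gaussianReal 0 1).prod ν))
      atTop atTop ∧
    Tendsto (fun t : ℝ => ∫ z : ℝ × ℝ,
        (max (|z.1 + t * σ * z.2| - t * ε) 0) ^ 2 ∂((gaussianReal 0 1).prod ν))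
      atBot atTop ∧
    ∃ tstar : ℝ, ∀ t : ℝ,
      (∫ z : ℝ × ℝ,
        (max (|z.1 + tstar * σ * z.2| - tstar * ε) 0) ^ 2 ∂((gaussianReal 0 1).prod ν)) ≤
      ∫ z : ℝ × ℝ,
        (max (|z.1 + t * σ * z.2| - t * ε) 0) ^ 2 ∂((gaussianReal 0 1).prod ν) := by
  classical
  set μ : Measure ℝ := gaussianReal 0 1 with hμ
  set m : Measure (ℝ × ℝ) := μ.prod ν with hm
  set F : ℝ → ℝ := fun t => ∫ z : ℝ × ℝ,
      (max (|z.1 + t * σ * z.2| - t * ε) 0) ^ 2 ∂m with hF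
  -- basic integrability facts
  have h1 : Integrable (fun z : ℝ × ℝ => z.1 ^ 2) m := by
    have hmap : Measure.map Prod.fst m = μ := by
      rw [hm, Measure.map_fst_prod]; simp
    have := gauss_sq_integrable
    rw [← hμ, ← hmap] at this
    exact (integrable_map_measure
      (by rw [hmap]; exact (continuous_pow 2).aestronglyMeasurable)
      measurable_fst.aemeasurable).mp this
  have h2 : Integrable (fun z : ℝ × ℝ => z.2 ^ 2) m := by
    have hmap : Measure.map Prod.snd m = ν := by
      rw [hm, Measure.map_snd_prod]; simp
    have := hνmom
    rw [← hmap] at this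
    exact (integrable_map_measure
      (by rw [hmap]; exact (continuous_pow 2).aestronglyMeasurable)
      measurable_snd.aemeasurable).mp this
  have hboundInt : ∀ c : ℝ, Integrable
      (fun z : ℝ × ℝ => 3 * z.1 ^ 2 + 3 * c ^ 2 * σ ^ 2 * z.2 ^ 2 + 3 * c ^ 2 * ε ^ 2) m :=
    fun c => ((h1.const_mul 3).add (h2.const_mul (3 * c ^ 2 * σ ^ 2))).add
      (integrable_const _)
  have hmeas : ∀ t : ℝ, Continuous
      (fun z : ℝ × ℝ => (max (|z.1 + t * σ * z.2| - t * ε) 0) ^ 2) := by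
    intro t
    exact (((continuous_fst.add (continuous_const.mul continuous_snd)).abs.sub
      continuous_const).max continuous_const).pow 2
  have hfnonneg : ∀ (t : ℝ) (z : ℝ × ℝ),
      (0:ℝ) ≤ (max (|z.1 + t * σ * z.2| - t * ε) 0) ^ 2 := fun t z => sq_nonneg _
  have hfint : ∀ t : ℝ, Integrable
      (fun z : ℝ × ℝ => (max (|z.1 + t * σ * z.2| - t * ε) 0) ^ 2) m := by
    intro t
    refine (hboundInt t).mono' (hmeas t).aestronglyMeasurable
      (Filter.Eventually.of_forall fun z => ?_)
    rw [Real.norm_eq_abs, abs_of_nonneg (hfnonneg t z)]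
    exact threshold_bound_aux σ ε hσ hε t z.1 z.2
  -- the set A and its measure
  set A : Set (ℝ × ℝ) := {z : ℝ × ℝ | 2 * ε ≤ σ * z.2 ∧ 0 < z.1} with hA
  have hAprod : A = Set.Ioi (0:ℝ) ×ˢ {y : ℝ | 2 * ε ≤ σ * y} := by
    ext z; simp [hA, Set.mem_prod, and_comm]
  have hsB : MeasurableSet {y : ℝ | 2 * ε ≤ σ * y} :=
    measurableSet_le measurable_const (measurable_const.mul measurable_id)
  have hAmeas : MeasurableSet A := by
    rw [hAprod]; exact measurableSet_Ioi.prod hsB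
  have hmA : m A = μ (Set.Ioi 0) * ν {y : ℝ | 2 * ε ≤ σ * y} := by
    rw [hAprod, hm, Measure.prod_prod]
  have hμIoi : μ (Set.Ioi 0) ≠ 0 := by
    intro h0
    have := (gaussianReal_absolutelyContinuous' 0 one_ne_zero) h0
    rw [Real.volume_Ioi] at this
    exact ENNReal.top_ne_zero this
  have hmApos : 0 < (m A).toReal := by
    refine ENNReal.toReal_pos ?_ (measure_ne_top m A)
    rw [hmA]
    exact mul_ne_zero hμIoi hpos.ne'
  set p : ℝ := (m A).toReal with hp
  -- Part 1: lower bound for t ≥ 0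
  have part1 : ∀ t : ℝ, 0 ≤ t → t ^ 2 * ε ^ 2 * p ≤ F t := by
    intro t ht
    have hlow : ∀ z ∈ A, t ^ 2 * ε ^ 2 ≤ (max (|z.1 + t * σ * z.2| - t * ε) 0) ^ 2 := by
      intro z hz
      obtain ⟨hz2, hz1⟩ := hz
      have hts : t * (2 * ε) ≤ t * (σ * z.2) := mul_le_mul_of_nonneg_left hz2 ht
      have hsum : 2 * (t * ε) ≤ z.1 + t * σ * z.2 := by nlinarith
      have habs : 2 * (t * ε) ≤ |z.1 + t * σ * z.2| :=
        le_trans hsum (le_abs_self _)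
      have hmax : t * ε ≤ max (|z.1 + t * σ * z.2| - t * ε) 0 := by
        refine le_trans (by linarith) (le_max_left _ _)
      have := mul_le_mul hmax hmax (by positivity) (le_trans (by positivity) hmax)
      nlinarith
    calc t ^ 2 * ε ^ 2 * p
        ≤ ∫ z in A, (max (|z.1 + t * σ * z.2| - t * ε) 0) ^ 2 ∂m :=
          setIntegral_ge_of_const_le_real hAmeas (measure_ne_top m A) hlow
            ((hfint t).integrableOn)
      _ ≤ F t := setIntegral_le_integral (hfint t)
            (Filter.Eventually.of_forall fun z => hfnonneg t z)
  -- lower bound for t ≤ 0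
  have hneg : ∀ t : ℝ, t ≤ 0 → t ^ 2 * ε ^ 2 ≤ F t := by
    intro t ht
    have hpt : ∀ z : ℝ × ℝ, t ^ 2 * ε ^ 2 ≤ (max (|z.1 + t * σ * z.2| - t * ε) 0) ^ 2 := by
      intro z
      have h0 : -(t * ε) ≤ max (|z.1 + t * σ * z.2| - t * ε) 0 := by
        refine le_trans ?_ (le_max_left _ _)
        have := abs_nonneg (z.1 + t * σ * z.2); linarith
      have h0' : (0:ℝ) ≤ -(t * ε) := by nlinarith
      nlinarith
    calc t ^ 2 * ε ^ 2 = ∫ _ : ℝ × ℝ, t ^ 2 * ε ^ 2 ∂m := by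
          rw [integral_const]; simp [hm]
      _ ≤ F t := integral_mono (integrable_const _) (hfint t)
            (fun z => hpt z)
  -- Part 2: tendsto atTop
  have part2 : Tendsto F atTop atTop := by
    refine tendsto_atTop_mono' atTop ?_
      ((tendsto_pow_atTop (two_ne_zero)).atTop_mul_const
        (by positivity : (0:ℝ) < ε ^ 2 * p))
    filter_upwards [eventually_ge_atTop (0:ℝ)] with t ht
    have := part1 t ht
    calc t ^ 2 * (ε ^ 2 * p) = t ^ 2 * ε ^ 2 * p := by ring
      _ ≤ F t := this
  -- Part 3: tendsto atBot
  have part3 : Tendsto F atBot atTop := by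
    have hsq : Tendsto (fun t : ℝ => t ^ 2 * ε ^ 2) atBot atTop := by
      have h1' : Tendsto (fun t : ℝ => (-t) ^ 2 * ε ^ 2) atBot atTop :=
        (((tendsto_pow_atTop (two_ne_zero)).atTop_mul_const
          (by positivity : (0:ℝ) < ε ^ 2)).comp tendsto_neg_atBot_atTop)
      refine h1'.congr fun t => by ring
    refine tendsto_atTop_mono' atBot ?_ hsq
    filter_upwards [eventually_le_atBot (0:ℝ)] with t ht
    exact hneg t ht
  -- Continuity of F
  have hcont : Continuous F := by
    rw [continuous_iff_continuousAt]
    intro t₀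
    have hball : ∀ᶠ t in 𝓝 t₀, |t| ≤ |t₀| + 1 := by
      filter_upwards [Metric.ball_mem_nhds t₀ one_pos] with t ht
      rw [Metric.mem_ball, Real.dist_eq] at ht
      have h1' := abs_sub_abs_le_abs_sub t t₀
      linarith
    refine continuousAt_of_dominated
      (Filter.Eventually.of_forall fun t => (hmeas t).aestronglyMeasurable)
      ?_ (hboundInt (|t₀| + 1)) ?_
    · filter_upwards [hball] with t ht
      refine Filter.Eventually.of_forall fun z => ?_
      rw [Real.norm_eq_abs, abs_of_nonneg (hfnonneg t z)]
      have hb := threshold_bound_aux σ ε hσ hε t z.1 z.2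
      have ht2 : t ^ 2 ≤ (|t₀| + 1) ^ 2 := by
        rw [← sq_abs t]
        exact pow_le_pow_left₀ (abs_nonneg t) ht 2
      have e1 : t ^ 2 * (σ ^ 2 * z.2 ^ 2) ≤ (|t₀| + 1) ^ 2 * (σ ^ 2 * z.2 ^ 2) :=
        mul_le_mul_of_nonneg_right ht2 (by positivity)
      have e2 : t ^ 2 * ε ^ 2 ≤ (|t₀| + 1) ^ 2 * ε ^ 2 :=
        mul_le_mul_of_nonneg_right ht2 (by positivity)
      nlinarith [hb, e1, e2]
    · refine Filter.Eventually.of_forall fun z => ?_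
      have : Continuous (fun t : ℝ =>
          (max (|z.1 + t * σ * z.2| - t * ε) 0) ^ 2) := by
        exact (((continuous_const.add ((continuous_id.mul continuous_const).mul
          continuous_const)).abs.sub (continuous_id.mul continuous_const)).max
          continuous_const).pow 2
      exact this.continuousAt
  -- Part 4: minimum attained
  have part4 : ∃ tstar : ℝ, ∀ t : ℝ, F tstar ≤ F t := by
    obtain ⟨b, hb⟩ := (part2.eventually_gt_atTop (F 0)).exists_forall_of_atTop
    obtain ⟨a, ha⟩ := (part3.eventually_gt_atTop (F 0)).exists_forall_of_atBot
    set a' : ℝ := min a 0 with ha'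
    set b' : ℝ := max b 0 with hb'
    have hab : a' ≤ b' := le_trans (min_le_right _ _) (le_max_right _ _)
    obtain ⟨tstar, htmem, htmin⟩ := isCompact_Icc.exists_isMinOn
      (Set.nonempty_Icc.mpr hab) hcont.continuousOn (s := Set.Icc a' b')
    refine ⟨tstar, fun t => ?_⟩
    by_cases hmem : t ∈ Set.Icc a' b'
    · exact htmin hmem
    · have h0mem : (0:ℝ) ∈ Set.Icc a' b' :=
        ⟨min_le_right _ _, le_max_right _ _⟩
      have hF0 : F tstar ≤ F 0 := htmin h0mem
      rw [Set.mem_Icc, not_and_or] at hmem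
      rcases hmem with hlt | hgt
      · push_neg at hlt
        have : F 0 < F t := ha t (le_trans (le_of_lt hlt) (min_le_left _ _))
        linarith
      · push_neg at hgt
        have : F 0 < F t := hb t (le_trans (le_max_left _ _) (le_of_lt hgt))
        linarith
  exact ⟨fun t ht => part1 t ht, part2, part3, part4⟩
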